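/- Importance weight of the strategic-response model: fix B, τ ∈ ℝ with 0 < B, B ≤ τ, and τ + B ≤ 1, and define ω : [0,1] → ℝ by ω(x) = 1 for x ∈ [0, τ − B), ω(x) = (τ − x)/B for x ∈ [τ − B, τ), ω(x) = (−x + τ + 2B)/B for x ∈ [τ, τ + B), and ω(x) = 1 for x ∈ [τ + B, 1]. Then, with respect to the uniform (Lebesgue) measure on [0,1]: ∫₀¹ ω(x) dx = 1 and ∫₀¹ ω(x)² dx − (∫₀¹ ω(x) dx)² = 2B/3; that is, ω is a valid importance weight (the induced distribution is a probability measure) and its variance under the source distribution equals 2B/3. -/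

import Mathlib

open MeasureTheory

/-- The importance weight of the strategic-response model with threshold `τ` and
manipulation budget `B`, as a piecewise function on `[0,1]`. -/
noncomputable def stratW (B τ : ℝ) (x : ℝ) : ℝ :=
  if x < τ - B then 1
  else if x < τ then (τ - x) / B
  else if x < τ + B then (-x + τ + 2 * B) / B
  else 1

lemma ae_ne_right (b : ℝ) : ∀ᵐ x : ℝ, x ≠ b := by
  have h : (volume : Measure ℝ) {b} = 0 := measure_singleton b
  rw [MeasureTheory.ae_iff]
  simpa using h

lemma integral_congr_Ioo {f g : ℝ → ℝ} {a b : ℝ} (hab : a ≤ b)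
    (h : ∀ x ∈ Set.Ioo a b, f x = g x) :
    ∫ x in a..b, f x = ∫ x in a..b, g x := by
  refine intervalIntegral.integral_congr_ae ?_
  filter_upwards [ae_ne_right b] with x hxb hx
  rw [Set.uIoc_of_le hab] at hx
  exact h x ⟨hx.1, lt_of_le_of_ne hx.2 hxb⟩

lemma intervalIntegrable_congr_Ioo {f g : ℝ → ℝ} {a b : ℝ} (hab : a ≤ b)
    (h : ∀ x ∈ Set.Ioo a b, f x = g x) (hg : IntervalIntegrable g volume a b) :
    IntervalIntegrable f volume a b := by
  rw [intervalIntegrable_iff, Set.uIoc_of_le hab] at hg ⊢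
  refine hg.congr ?_
  rw [Filter.EventuallyEq, MeasureTheory.ae_restrict_iff' measurableSet_Ioc]
  filter_upwards [ae_ne_right b] with x hxb hx
  exact (h x ⟨hx.1, lt_of_le_of_ne hx.2 hxb⟩).symm

lemma integral_poly (a b p q r : ℝ) :
    (∫ x in a..b, (p + q * x + r * x ^ 2)) =
      (p * b + q * b ^ 2 / 2 + r * b ^ 3 / 3) - (p * a + q * a ^ 2 / 2 + r * a ^ 3 / 3) := by
  have hd : ∀ x ∈ Set.uIcc a b,
      HasDerivAt (fun y => p * y + q * y ^ 2 / 2 + r * y ^ 3 / 3) (p + q * x + r * x ^ 2) x := by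
    intro x _
    have h1 : HasDerivAt (fun y : ℝ => p * y) p x := by
      simpa using (hasDerivAt_id x).const_mul p
    have h2 : HasDerivAt (fun y : ℝ => q * y ^ 2 / 2) (q * x) x := by
      have h := ((hasDerivAt_pow 2 x).const_mul q).div_const 2
      refine h.congr_deriv ?_
      push_cast; ring
    have h3 : HasDerivAt (fun y : ℝ => r * y ^ 3 / 3) (r * x ^ 2) x := by
      have h := ((hasDerivAt_pow 3 x).const_mul r).div_const 3
      refine h.congr_deriv ?_
      push_cast; ring
    exact (h1.add h2).add h3
  rw [intervalIntegral.integral_eq_sub_of_hasDerivAt hd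
    ((by fun_prop : Continuous fun x : ℝ => p + q * x + r * x ^ 2).intervalIntegrable a b)]

/-- For `0 < B`, `B ≤ τ`, `τ + B ≤ 1`, the strategic-response importance weight `ω`
integrates to `1` over `[0,1]` with respect to Lebesgue measure (so the induced feature
distribution is a probability measure), and its variance
`∫ ω² − (∫ ω)²` over `[0,1]` equals `2B/3`. -/
theorem strategic_response_importance_weight
    (B τ : ℝ) (hB : 0 < B) (hBτ : B ≤ τ) (hτB : τ + B ≤ 1) :
    (∫ x in Set.Icc (0 : ℝ) 1, stratW B τ x) = 1 ∧
    (∫ x in Set.Icc (0 : ℝ) 1, (stratW B τ x) ^ 2)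
      - (∫ x in Set.Icc (0 : ℝ) 1, stratW B τ x) ^ 2 = 2 * B / 3 := by
  have hBne : B ≠ 0 := hB.ne'
  have h0c : (0 : ℝ) ≤ τ - B := by linarith
  have hcτ : τ - B ≤ τ := by linarith
  have hττ : τ ≤ τ + B := by linarith
  have hτ1 : τ + B ≤ 1 := hτB
  -- pointwise descriptions on open intervals
  have hs1 : ∀ x ∈ Set.Ioo (0 : ℝ) (τ - B), stratW B τ x = 1 + 0 * x + 0 * x ^ 2 := by
    intro x hx
    simp [stratW, hx.2]
  have hs2 : ∀ x ∈ Set.Ioo (τ - B) τ,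
      stratW B τ x = τ / B + (-(1 / B)) * x + 0 * x ^ 2 := by
    intro x hx
    rw [stratW, if_neg (not_lt.2 hx.1.le), if_pos hx.2]
    field_simp
    ring
  have hs3 : ∀ x ∈ Set.Ioo τ (τ + B),
      stratW B τ x = (τ + 2 * B) / B + (-(1 / B)) * x + 0 * x ^ 2 := by
    intro x hx
    rw [stratW, if_neg (by push_neg; linarith [hx.1]), if_neg (not_lt.2 hx.1.le),
      if_pos hx.2]
    field_simp
    ring
  have hs4 : ∀ x ∈ Set.Ioo (τ + B) (1 : ℝ), stratW B τ x = 1 + 0 * x + 0 * x ^ 2 := by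
    intro x hx
    rw [stratW, if_neg (by push_neg; linarith [hx.1]), if_neg (by push_neg; linarith [hx.1]),
      if_neg (not_lt.2 hx.1.le)]
    ring
  have hq1 : ∀ x ∈ Set.Ioo (0 : ℝ) (τ - B),
      (stratW B τ x) ^ 2 = 1 + 0 * x + 0 * x ^ 2 := by
    intro x hx; rw [hs1 x hx]; ring
  have hq2 : ∀ x ∈ Set.Ioo (τ - B) τ,
      (stratW B τ x) ^ 2 = τ ^ 2 / B ^ 2 + (-(2 * τ / B ^ 2)) * x + (1 / B ^ 2) * x ^ 2 := by
    intro x hx; rw [hs2 x hx]; field_simp; ring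
  have hq3 : ∀ x ∈ Set.Ioo τ (τ + B),
      (stratW B τ x) ^ 2 = (τ + 2 * B) ^ 2 / B ^ 2 + (-(2 * (τ + 2 * B) / B ^ 2)) * x
        + (1 / B ^ 2) * x ^ 2 := by
    intro x hx; rw [hs3 x hx]; field_simp; ring
  have hq4 : ∀ x ∈ Set.Ioo (τ + B) (1 : ℝ),
      (stratW B τ x) ^ 2 = 1 + 0 * x + 0 * x ^ 2 := by
    intro x hx; rw [hs4 x hx]; ring
  -- integrability of each piece
  have cont : ∀ p q r : ℝ, Continuous fun x : ℝ => p + q * x + r * x ^ 2 := by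
    intro p q r; fun_prop
  have i1 : IntervalIntegrable (stratW B τ) volume 0 (τ - B) :=
    intervalIntegrable_congr_Ioo h0c hs1 ((cont _ _ _).intervalIntegrable _ _)
  have i2 : IntervalIntegrable (stratW B τ) volume (τ - B) τ :=
    intervalIntegrable_congr_Ioo hcτ hs2 ((cont _ _ _).intervalIntegrable _ _)
  have i3 : IntervalIntegrable (stratW B τ) volume τ (τ + B) :=
    intervalIntegrable_congr_Ioo hττ hs3 ((cont _ _ _).intervalIntegrable _ _)
  have i4 : IntervalIntegrable (stratW B τ) volume (τ + B) 1 :=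
    intervalIntegrable_congr_Ioo hτ1 hs4 ((cont _ _ _).intervalIntegrable _ _)
  have j1 : IntervalIntegrable (fun x => (stratW B τ x) ^ 2) volume 0 (τ - B) :=
    intervalIntegrable_congr_Ioo h0c hq1 ((cont _ _ _).intervalIntegrable _ _)
  have j2 : IntervalIntegrable (fun x => (stratW B τ x) ^ 2) volume (τ - B) τ :=
    intervalIntegrable_congr_Ioo hcτ hq2 ((cont _ _ _).intervalIntegrable _ _)
  have j3 : IntervalIntegrable (fun x => (stratW B τ x) ^ 2) volume τ (τ + B) :=
    intervalIntegrable_congr_Ioo hττ hq3 ((cont _ _ _).intervalIntegrable _ _)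
  have j4 : IntervalIntegrable (fun x => (stratW B τ x) ^ 2) volume (τ + B) 1 :=
    intervalIntegrable_congr_Ioo hτ1 hq4 ((cont _ _ _).intervalIntegrable _ _)
  -- values of the pieces
  have v1 : ∫ x in (0 : ℝ)..(τ - B), stratW B τ x = τ - B := by
    rw [integral_congr_Ioo h0c hs1, integral_poly]; ring
  have v2 : ∫ x in (τ - B)..τ, stratW B τ x = B / 2 := by
    rw [integral_congr_Ioo hcτ hs2, integral_poly]; field_simp; ring
  have v3 : ∫ x in τ..(τ + B), stratW B τ x = 3 * B / 2 := by
    rw [integral_congr_Ioo hττ hs3, integral_poly]; field_simp; ring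
  have v4 : ∫ x in (τ + B)..(1 : ℝ), stratW B τ x = 1 - τ - B := by
    rw [integral_congr_Ioo hτ1 hs4, integral_poly]; ring
  have w1 : ∫ x in (0 : ℝ)..(τ - B), (stratW B τ x) ^ 2 = τ - B := by
    rw [integral_congr_Ioo h0c hq1, integral_poly]; ring
  have w2 : ∫ x in (τ - B)..τ, (stratW B τ x) ^ 2 = B / 3 := by
    rw [integral_congr_Ioo hcτ hq2, integral_poly]; field_simp; ring
  have w3 : ∫ x in τ..(τ + B), (stratW B τ x) ^ 2 = 7 * B / 3 := by
    rw [integral_congr_Ioo hττ hq3, integral_poly]; field_simp; ring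
  have w4 : ∫ x in (τ + B)..(1 : ℝ), (stratW B τ x) ^ 2 = 1 - τ - B := by
    rw [integral_congr_Ioo hτ1 hq4, integral_poly]; ring
  -- assemble
  have hIcc : ∫ x in Set.Icc (0 : ℝ) 1, stratW B τ x = ∫ x in (0 : ℝ)..1, stratW B τ x := by
    rw [intervalIntegral.integral_of_le (by norm_num : (0 : ℝ) ≤ 1),
      MeasureTheory.integral_Icc_eq_integral_Ioc]
  have hIcc2 : ∫ x in Set.Icc (0 : ℝ) 1, (stratW B τ x) ^ 2
      = ∫ x in (0 : ℝ)..1, (stratW B τ x) ^ 2 := by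
    rw [intervalIntegral.integral_of_le (by norm_num : (0 : ℝ) ≤ 1),
      MeasureTheory.integral_Icc_eq_integral_Ioc]
  have e12 := intervalIntegral.integral_add_adjacent_intervals i1 i2
  have e123 := intervalIntegral.integral_add_adjacent_intervals (i1.trans i2) i3
  have eall := intervalIntegral.integral_add_adjacent_intervals ((i1.trans i2).trans i3) i4
  have f12 := intervalIntegral.integral_add_adjacent_intervals j1 j2
  have f123 := intervalIntegral.integral_add_adjacent_intervals (j1.trans j2) j3
  have fall := intervalIntegral.integral_add_adjacent_intervals ((j1.trans j2).trans j3) j4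
  have hA : ∫ x in Set.Icc (0 : ℝ) 1, stratW B τ x = 1 := by
    rw [hIcc, ← eall, ← e123, ← e12, v1, v2, v3, v4]; ring
  refine ⟨hA, ?_⟩
  have hA2 : ∫ x in Set.Icc (0 : ℝ) 1, (stratW B τ x) ^ 2 = 1 + 2 * B / 3 := by
    rw [hIcc2, ← fall, ← f123, ← f12, w1, w2, w3, w4]; ring
  rw [hA, hA2]; ring
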